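/- arXiv:1805.01820 — 2 statements merged into one kernel-verified Lean document; each statement's English description precedes it below -/
import Mathlib

section
/- Let p ≥ 2, H ≥ 2, and let M be the p×H block matrix M = [[B₁, 0], [B₂, B₃], [0, B₄]], where B₁ and B₂ are scalars, B₃ is a 1×(H−1) row vector, and B₄ is a (p−2)×(H−1) matrix. Let ν > 1, λ > 0, A > 0, α > 0, n > 0 be reals, and suppose: (1 − 1/(2ν)) λ ≤ B₁² ≤ (1 + 1/(2ν)) λ, and the Frobenius-norm bound ‖ [[B₂², B₂B₃], [B₃ᵀB₂, B₃ᵀB₃ + B₄ᵀB₄]] − (A/n) I_H ‖_F ≤ √p · α / n holds. Then λ_max(M Mᵀ) ≥ A/n − √p · α / n + (1 − 1/(2ν)) λ. -/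
open MeasureTheory ProbabilityTheory Filter Matrix Asymptotics
open scoped ENNReal NNReal Topology

noncomputable section

/-- The largest eigenvalue of a symmetric matrix, via the Rayleigh quotient. -/
def lambdaMax {ι : Type*} [Fintype ι] (A : Matrix ι ι ℝ) : ℝ :=
  sSup {r : ℝ | ∃ v : ι → ℝ, ∑ i, v i ^ 2 = 1 ∧ r = ∑ i, ∑ j, v i * A i j * v j}

/-- The smallest eigenvalue of a symmetric matrix, via the Rayleigh quotient. -/
def lambdaMin {ι : Type*} [Fintype ι] (A : Matrix ι ι ℝ) : ℝ :=
  sInf {r : ℝ | ∃ v : ι → ℝ, ∑ i, v i ^ 2 = 1 ∧ r = ∑ i, ∑ j, v i * A i j * v j}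

/-- `λ_max^{(m)}(A)`: the largest eigenvalue over all `m × m` principal submatrices. -/
def lambdaMaxSparse {ι : Type*} [Fintype ι] (m : ℕ) (A : Matrix ι ι ℝ) : ℝ :=
  sSup {r : ℝ | ∃ S : Finset ι, S.card = m ∧
    r = lambdaMax (A.submatrix (Subtype.val : {x // x ∈ S} → ι) Subtype.val)}

/-- The SDP relaxation `λ̃_max^{(m)}(A)`. -/
def lambdaMaxSDP {p : ℕ} (m : ℝ) (A : Matrix (Fin p) (Fin p) ℝ) : ℝ :=
  sSup {r : ℝ | ∃ M : Matrix (Fin p) (Fin p) ℝ, M.PosSemidef ∧ M.trace = 1 ∧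
    (∑ i, ∑ j, |M i j|) ≤ m ∧ r = (A * M).trace}

/-- `X ~ N(0, S)`: every linear functional of `X` is a centered Gaussian with the
appropriate variance. -/
def IsGaussianVec {Ω : Type*} [MeasurableSpace Ω] {p : ℕ} (μ : Measure Ω)
    (X : Ω → Fin p → ℝ) (S : Matrix (Fin p) (Fin p) ℝ) : Prop :=
  ∀ a : Fin p → ℝ,
    Measure.map (fun ω => ∑ i, a i * X ω i) μ =
      gaussianReal 0 (Real.toNNReal (∑ i, ∑ j, a i * S i j * a j))

/-- The `i`-th coordinate of the central curve `E[x | y]`. -/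
def condExpVec {Ω : Type*} [MeasurableSpace Ω] {p : ℕ} (μ : Measure Ω)
    (X : Ω → Fin p → ℝ) (Y : Ω → ℝ) (i : Fin p) : Ω → ℝ :=
  μ[fun ω => X ω i | MeasurableSpace.comap Y Real.measurableSpace]

/-- The matrix `var(E[x | y])`. -/
def condExpCovMatrix {Ω : Type*} [MeasurableSpace Ω] {p : ℕ} (μ : Measure Ω)
    (X : Ω → Fin p → ℝ) (Y : Ω → ℝ) : Matrix (Fin p) (Fin p) ℝ :=
  Matrix.of fun i j =>
    (∫ ω, condExpVec μ X Y i ω * condExpVec μ X Y j ω ∂μ) -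
      (∫ ω, X ω i ∂μ) * (∫ ω, X ω j ∂μ)

/-- The generalized signal-to-noise ratio: largest eigenvalue of `var(E[x|y])`. -/
def gSNR {Ω : Type*} [MeasurableSpace Ω] {p : ℕ} (μ : Measure Ω)
    (X : Ω → Fin p → ℝ) (Y : Ω → ℝ) : ℝ :=
  lambdaMax (condExpCovMatrix μ X Y)

/-- The index of the `l`-th observation in the `h`-th slice. -/
def sliceIndex (c H : ℕ) (h : Fin H) (l : Fin c) : Fin (c * H) :=
  ⟨h.1 * c + l.1, by
    have h1 := h.2; have h2 := l.2
    calc h.1 * c + l.1 < h.1 * c + c := by omega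
      _ = (h.1 + 1) * c := by ring
      _ ≤ H * c := Nat.mul_le_mul_right c h1
      _ = c * H := Nat.mul_comm H c⟩

/-- The SIR estimate `Λ̂_H` of `var(E[x|y])`, using `H` slices of `c` observations each,
sorted by the value of the response. -/
def sirEstimate {p : ℕ} (c H : ℕ) (y : Fin (c * H) → ℝ)
    (x : Fin (c * H) → Fin p → ℝ) : Matrix (Fin p) (Fin p) ℝ :=
  Matrix.of fun i j =>
    (H : ℝ)⁻¹ * ∑ h : Fin H,
      ((c : ℝ)⁻¹ * ∑ l : Fin c, x (Tuple.sort y (sliceIndex c H h l)) i) *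
      ((c : ℝ)⁻¹ * ∑ l : Fin c, x (Tuple.sort y (sliceIndex c H h l)) j)

/-- Frobenius norm of a real matrix. -/
def frobNorm {ι κ : Type*} [Fintype ι] [Fintype κ] (A : Matrix ι κ ℝ) : ℝ :=
  Real.sqrt (∑ i, ∑ j, A i j ^ 2)

/-- `g(z)` is sub-Gaussian when `z ~ N(0,1)`. -/
def SubGaussianStd (g : ℝ → ℝ) : Prop :=
  ∃ K : ℝ, 0 < K ∧ ∀ u : ℝ, 0 ≤ u →
    (gaussianReal 0 1) {z : ℝ | u ≤ |g z|} ≤ ENNReal.ofReal (2 * Real.exp (-(u ^ 2) / K))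

/-- Condition B): `f(z)` is sub-Gaussian, `E[f(z)] = 0` and
`var(f(z)) > C·var(E[z | f(z)+ε])` where `z, ε` are i.i.d. `N(0,1)`. -/
def ConditionB (C : ℝ) (g : ℝ → ℝ) : Prop :=
  SubGaussianStd g ∧ (∫ z, g z ∂(gaussianReal 0 1)) = 0 ∧
    C * variance
        (((gaussianReal 0 1).prod (gaussianReal 0 1))[fun w => w.1 |
          MeasurableSpace.comap (fun w : ℝ × ℝ => g w.1 + w.2) Real.measurableSpace])
        ((gaussianReal 0 1).prod (gaussianReal 0 1)) <
      variance (fun w : ℝ × ℝ => g w.1) ((gaussianReal 0 1).prod (gaussianReal 0 1))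

/-- The sliced stable condition for the central curve `m(y) = E[x|y]`. -/
def SlicedStable {Ω : Type*} [MeasurableSpace Ω] {p : ℕ} (μ : Measure Ω)
    (X : Ω → Fin p → ℝ) (Y : Ω → ℝ) (ϑ : ℝ) : Prop :=
  ∃ a₁ a₂ a₃ : ℝ, 0 < a₁ ∧ a₁ < 1 ∧ 1 < a₂ ∧ 0 < a₃ ∧
    ∃ H₀ : ℕ, ∀ H : ℕ, H₀ < H → ∀ a : ℕ → EReal,
      a 0 = ⊥ → a H = ⊤ → (∀ h < H, a h ≤ a (h + 1)) →
      (∀ h < H,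
        ENNReal.ofReal (a₁ / H) ≤
            μ {ω | a h ≤ (Y ω : EReal) ∧ (Y ω : EReal) ≤ a (h + 1)} ∧
          μ {ω | a h ≤ (Y ω : EReal) ∧ (Y ω : EReal) ≤ a (h + 1)} ≤
            ENNReal.ofReal (a₂ / H)) →
      ∀ γ : Fin p → ℝ,
        (H : ℝ)⁻¹ * ∑ h ∈ Finset.range H,
            variance (fun ω => ∑ i, γ i * condExpVec μ X Y i ω)
              (μ[|{ω | a h ≤ (Y ω : EReal) ∧ (Y ω : EReal) < a (h + 1)}]) ≤
          (a₃ / (H : ℝ) ^ ϑ) * variance (fun ω => ∑ i, γ i * condExpVec μ X Y i ω) μ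

/-- Rejection region of the test `Ψ_SSS = max{ψ₁(τ), ψ₂(τ')}` based on `n = c·H`
i.i.d. observations. -/
def rejectSSS {Ω : Type*} {p : ℕ} (c H ks : ℕ) (S : Matrix (Fin p) (Fin p) ℝ)
    (τ τ' : ℝ) (X : Ω → Fin p → ℝ) (Y : Ω → ℝ) : Set (Fin (c * H) → Ω) :=
  {ω | S.trace / ((c * H : ℕ) : ℝ) + τ <
        lambdaMax (sirEstimate c H (fun i => Y (ω i)) fun i => X (ω i)) ∨
      τ' < lambdaMaxSparse ks (sirEstimate c H (fun i => Y (ω i)) fun i => X (ω i))}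

/-- Rejection region of `Ψ_SSSa = max{ψ₁(τ), ψ₂(τ'), ψ₃(τ'')}`. -/
def rejectSSSa {Ω : Type*} {p : ℕ} (c H ks : ℕ) (S : Matrix (Fin p) (Fin p) ℝ)
    (τ τ' τ'' : ℝ) (X : Ω → Fin p → ℝ) (Y : Ω → ℝ) : Set (Fin (c * H) → Ω) :=
  {ω | S.trace / ((c * H : ℕ) : ℝ) + τ <
        lambdaMax (sirEstimate c H (fun i => Y (ω i)) fun i => X (ω i)) ∨
      τ' < lambdaMaxSparse ks (sirEstimate c H (fun i => Y (ω i)) fun i => X (ω i)) ∨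
      τ'' < ((c * H : ℕ) : ℝ)⁻¹ * ∑ j, (Y (ω j) ^ 2 - 1)}

/-- Rejection region of the computationally feasible test `Ψ̃_SSS = max{ψ₁(τ), ψ̃₂(τ')}`. -/
def rejectSSStilde {Ω : Type*} {p : ℕ} (c H ks : ℕ) (S : Matrix (Fin p) (Fin p) ℝ)
    (τ τ' : ℝ) (X : Ω → Fin p → ℝ) (Y : Ω → ℝ) : Set (Fin (c * H) → Ω) :=
  {ω | S.trace / ((c * H : ℕ) : ℝ) + τ <
        lambdaMax (sirEstimate c H (fun i => Y (ω i)) fun i => X (ω i)) ∨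
      τ' < lambdaMaxSDP ks (sirEstimate c H (fun i => Y (ω i)) fun i => X (ω i))}

/-- Rejection region of `Ψ̃_SSSa = max{ψ₁(τ), ψ̃₂(τ'), ψ₃(τ'')}`. -/
def rejectSSSaTilde {Ω : Type*} {p : ℕ} (c H ks : ℕ) (S : Matrix (Fin p) (Fin p) ℝ)
    (τ τ' τ'' : ℝ) (X : Ω → Fin p → ℝ) (Y : Ω → ℝ) : Set (Fin (c * H) → Ω) :=
  {ω | S.trace / ((c * H : ℕ) : ℝ) + τ <
        lambdaMax (sirEstimate c H (fun i => Y (ω i)) fun i => X (ω i)) ∨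
      τ' < lambdaMaxSDP ks (sirEstimate c H (fun i => Y (ω i)) fun i => X (ω i)) ∨
      τ'' < ((c * H : ℕ) : ℝ)⁻¹ * ∑ j, (Y (ω j) ^ 2 - 1)}
lemma aux_entry_le_frobNorm {ι κ : Type*} [Fintype ι] [Fintype κ] (A : Matrix ι κ ℝ)
    (i : ι) (j : κ) : |A i j| ≤ frobNorm A := by
  unfold frobNorm
  rw [← Real.sqrt_sq_eq_abs]
  apply Real.sqrt_le_sqrt
  calc A i j ^ 2 ≤ ∑ j', A i j' ^ 2 :=
        Finset.single_le_sum (f := fun j' => A i j' ^ 2) (fun _ _ => sq_nonneg _)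
          (Finset.mem_univ _)
    _ ≤ ∑ i', ∑ j', A i' j' ^ 2 :=
        Finset.single_le_sum (f := fun i' => ∑ j', A i' j' ^ 2)
          (fun _ _ => Finset.sum_nonneg fun _ _ => sq_nonneg _) (Finset.mem_univ _)

lemma aux_sq_single_le {ι : Type*} [Fintype ι] (g : ι → ℝ) (m : ι) :
    g m ^ 2 ≤ ∑ i, g i ^ 2 :=
  Finset.single_le_sum (f := fun i => g i ^ 2) (fun _ _ => sq_nonneg _) (Finset.mem_univ m)

lemma aux_rayleigh_le_lambdaMax {ι : Type*} [Fintype ι] (A : Matrix ι ι ℝ)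
    (v : ι → ℝ) (hv : ∑ i, v i ^ 2 = 1) :
    ∑ i, ∑ j, v i * A i j * v j ≤ lambdaMax A := by
  apply le_csSup
  · refine ⟨∑ i, ∑ j, |A i j|, ?_⟩
    rintro x ⟨w, hw, rfl⟩
    have hwle : ∀ i, |w i| ≤ 1 := by
      intro i
      rw [← Real.sqrt_one, ← Real.sqrt_sq_eq_abs]
      apply Real.sqrt_le_sqrt
      rw [← hw]
      exact Finset.single_le_sum (f := fun j => w j ^ 2) (fun _ _ => sq_nonneg _)
        (Finset.mem_univ i)
    refine Finset.sum_le_sum fun i _ => Finset.sum_le_sum fun j _ => ?_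
    calc w i * A i j * w j ≤ |w i * A i j * w j| := le_abs_self _
      _ = |w i| * |A i j| * |w j| := by rw [abs_mul, abs_mul]
      _ ≤ 1 * |A i j| * 1 :=
          mul_le_mul (mul_le_mul (hwle i) le_rfl (abs_nonneg _) zero_le_one) (hwle j)
            (abs_nonneg _) (by positivity)
      _ = |A i j| := by ring
  · exact ⟨v, hv, rfl⟩

/-- **Lemma 3.** Let `M = [[B₁, 0], [B₂, B₃], [0, B₄]]` be a `p×H` block matrix
(`B₁ = M₀₀`, `B₂ = M₁₀` scalars, `B₃` the rest of the second row, `B₄` the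
lower-right block), with `(1 − 1/(2ν))λ ≤ B₁² ≤ (1 + 1/(2ν))λ` and
`‖M₋ᵀM₋ − (A/n)I_H‖_F ≤ √p·α/n`, where `M₋` is `M` with its first row removed
(so that `M₋ᵀM₋ = [[B₂², B₂B₃], [B₃ᵀB₂, B₃ᵀB₃ + B₄ᵀB₄]]`). Then
`λ_max(MMᵀ) ≥ A/n − √p·α/n + (1 − 1/(2ν))λ`. -/
theorem block_matrix_eigenvalue_lower_bound
    (p H : ℕ) (hp : 2 ≤ p) (hH : 2 ≤ H)
    (M : Matrix (Fin p) (Fin H) ℝ)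
    (ν lam A α n : ℝ)
    (hν : 1 < ν) (hlam : 0 < lam) (hA : 0 < A) (hα : 0 < α) (hn : 0 < n)
    -- block structure: zeros in the first row except the `(1,1)` entry
    (hrow0 : ∀ j : Fin H, j.1 ≠ 0 → M ⟨0, by omega⟩ j = 0)
    -- block structure: zeros in the first column below the second row
    (hcol0 : ∀ i : Fin p, 2 ≤ i.1 → M i ⟨0, by omega⟩ = 0)
    -- `(1 − 1/(2ν))λ ≤ B₁² ≤ (1 + 1/(2ν))λ`
    (hB1l : (1 - 1 / (2 * ν)) * lam ≤ M ⟨0, by omega⟩ ⟨0, by omega⟩ ^ 2)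
    (hB1u : M ⟨0, by omega⟩ ⟨0, by omega⟩ ^ 2 ≤ (1 + 1 / (2 * ν)) * lam)
    -- Frobenius bound on the Gram matrix of `M` with its first row removed
    (hfrob : frobNorm
        ((M.submatrix (fun i : Fin (p - 1) => (⟨i.1 + 1, by have := i.2; omega⟩ : Fin p)) id)ᵀ *
            M.submatrix (fun i : Fin (p - 1) => (⟨i.1 + 1, by have := i.2; omega⟩ : Fin p)) id -
          (A / n) • (1 : Matrix (Fin H) (Fin H) ℝ)) ≤ Real.sqrt p * α / n) :
    A / n - Real.sqrt p * α / n + (1 - 1 / (2 * ν)) * lam ≤ lambdaMax (M * Mᵀ) := by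
  obtain ⟨k, rfl⟩ : ∃ k, p = k + 2 := ⟨p - 2, by omega⟩
  set B1 := M ⟨0, by omega⟩ ⟨0, by omega⟩ with hB1def
  set B2 := M ⟨1, by omega⟩ ⟨0, by omega⟩ with hB2def
  have key : ∀ (f : Fin (k + 2) → ℝ), (∀ i : Fin (k + 2), 2 ≤ i.1 → f i = 0) →
      ∑ i, f i = f ⟨0, by omega⟩ + f ⟨1, by omega⟩ := by
    intro f hf
    rw [← Finset.sum_pair (a := (⟨0, by omega⟩ : Fin (k + 2))) (b := ⟨1, by omega⟩)
      (by simp [Fin.ext_iff])]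
    symm
    apply Finset.sum_subset (Finset.subset_univ _)
    intro i _ hi
    apply hf
    simp only [Finset.mem_insert, Finset.mem_singleton, not_or, Fin.ext_iff] at hi
    omega
  -- Step 1: B2^2 ≥ A/n - √p α / n
  have hN00 : ((M.submatrix (fun i : Fin (k + 2 - 1) =>
        (⟨i.1 + 1, by have := i.2; omega⟩ : Fin (k+2))) id)ᵀ *
      M.submatrix (fun i : Fin (k + 2 - 1) =>
        (⟨i.1 + 1, by have := i.2; omega⟩ : Fin (k+2))) id -
      (A / n) • (1 : Matrix (Fin H) (Fin H) ℝ)) ⟨0, by omega⟩ ⟨0, by omega⟩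
      = B2 ^ 2 - A / n := by
    simp only [Matrix.sub_apply, Matrix.mul_apply, Matrix.transpose_apply,
      Matrix.submatrix_apply, Matrix.smul_apply, Matrix.one_apply_eq, smul_eq_mul, mul_one, id]
    congr 1
    have step : ∀ i : Fin (k + 2 - 1), M ⟨i.1 + 1, by omega⟩ ⟨0, by omega⟩ *
        M ⟨i.1 + 1, by omega⟩ ⟨0, by omega⟩ =
        if i = ⟨0, by omega⟩ then B2 ^ 2 else 0 := by
      intro i
      rcases Nat.eq_zero_or_pos i.1 with h | h
      · rw [if_pos (Fin.ext h)]
        have e : (⟨i.1 + 1, by omega⟩ : Fin (k + 2)) = ⟨1, by omega⟩ := by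
          rw [Fin.ext_iff]; simp [h]
        rw [e, ← hB2def, sq]
      · rw [if_neg (by rw [Fin.ext_iff]; show ¬ i.1 = 0; omega),
          hcol0 ⟨i.1 + 1, by omega⟩ (by simp; omega)]
        ring
    rw [Finset.sum_congr rfl fun i _ => step i, Finset.sum_ite_eq' Finset.univ]
    simp
  have habs : |B2 ^ 2 - A / n| ≤ Real.sqrt ((k + 2 : ℕ) : ℝ) * α / n := by
    rw [← hN00]
    exact le_trans (aux_entry_le_frobNorm _ _ _) hfrob
  have hB2sq : A / n - Real.sqrt ((k + 2 : ℕ) : ℝ) * α / n ≤ B2 ^ 2 := by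
    have h := (abs_le.mp habs).1
    linarith
  -- Step 2: Rayleigh quotient at v = (B1, B2, 0, ...)/√s
  have hB1pos : 0 < B1 ^ 2 := by
    have h1 : 0 < 1 - 1 / (2 * ν) := by
      have : 1 / (2 * ν) < 1 := by
        rw [div_lt_one (by linarith)]; linarith
      linarith
    nlinarith
  set s := B1 ^ 2 + B2 ^ 2 with hsdef
  have hs : 0 < s := by positivity
  have hss : Real.sqrt s ^ 2 = s := Real.sq_sqrt hs.le
  set v : Fin (k + 2) → ℝ :=
    fun i => (if i.1 = 0 then B1 else if i.1 = 1 then B2 else 0) / Real.sqrt s with hvdef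
  have hv0 : v ⟨0, by omega⟩ = B1 / Real.sqrt s := by simp only [hvdef]; norm_num
  have hv1 : v ⟨1, by omega⟩ = B2 / Real.sqrt s := by simp only [hvdef]; norm_num
  have hv2 : ∀ i : Fin (k + 2), 2 ≤ i.1 → v i = 0 := by
    intro i hi
    rw [hvdef]
    simp only [if_neg (by omega : ¬ i.1 = 0), if_neg (by omega : ¬ i.1 = 1), zero_div]
  have hvnorm : ∑ i, v i ^ 2 = 1 := by
    rw [key (fun i => v i ^ 2) (fun i hi => by simp [hv2 i hi]), hv0, hv1,
      div_pow, div_pow, ← add_div, hss, ← hsdef, div_self hs.ne']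
  set r := ∑ i, ∑ j, v i * (M * Mᵀ) i j * v j with hrdef
  have h1 : ∀ i j, v i * (M * Mᵀ) i j * v j = ∑ m, (v i * M i m) * (v j * M j m) := by
    intro i j
    rw [Matrix.mul_apply, Finset.mul_sum, Finset.sum_mul]
    exact Finset.sum_congr rfl fun m _ => by rw [Matrix.transpose_apply]; ring
  have hr : r = ∑ m, (∑ i, v i * M i m) ^ 2 := by
    rw [hrdef]
    calc ∑ i, ∑ j, v i * (M * Mᵀ) i j * v j
        = ∑ i, ∑ j, ∑ m, (v i * M i m) * (v j * M j m) :=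
          Finset.sum_congr rfl fun i _ => Finset.sum_congr rfl fun j _ => h1 i j
      _ = ∑ i, ∑ m, ∑ j, (v i * M i m) * (v j * M j m) :=
          Finset.sum_congr rfl fun i _ => Finset.sum_comm
      _ = ∑ m, ∑ i, ∑ j, (v i * M i m) * (v j * M j m) := Finset.sum_comm
      _ = ∑ m, (∑ i, v i * M i m) ^ 2 := by
          refine Finset.sum_congr rfl fun m _ => ?_
          rw [sq, Finset.sum_mul_sum]
  have hvcol : ∀ m : Fin H, ∑ i, v i * M i m =
      (B1 * M ⟨0, by omega⟩ m + B2 * M ⟨1, by omega⟩ m) / Real.sqrt s := by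
    intro m
    rw [key (fun i => v i * M i m) (fun i hi => by simp [hv2 i hi]), hv0, hv1]
    rw [div_mul_eq_mul_div, div_mul_eq_mul_div, ← add_div]
  have hrge : s ≤ r := by
    rw [hr]
    have h0 : (∑ i, v i * M i ⟨0, by omega⟩) ^ 2 = s := by
      rw [hvcol, ← hB1def, ← hB2def, ← sq, ← sq, ← hsdef, div_pow, hss,
        sq, mul_div_assoc, div_self hs.ne', mul_one]
    rw [← h0]
    exact aux_sq_single_le (fun m => ∑ i, v i * M i m) ⟨0, by omega⟩
  -- Step 3
  have hle : r ≤ lambdaMax (M * Mᵀ) := by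
    rw [hrdef]
    exact aux_rayleigh_le_lambdaMax (M * Mᵀ) v hvnorm
  linarith


end
end

section
/- Let x₁,…,x_p, ε be independent standard normal random variables, let k ≤ p, set S = x₁ + … + x_k, and define y = S − S³/(3k) + ε. Then E[x_j · y] = 0 for every j = 1,…,p; that is, the response y is marginally uncorrelated with every covariate. -/
open MeasureTheory ProbabilityTheory Filter Matrix Asymptotics
open scoped ENNReal NNReal Topology

noncomputable section

section AuxGaussianMoments
open Real


/-- n-th moment of the standard gaussian integrand against Lebesgue. -/
def Jmom (n : ℕ) : ℝ := ∫ x : ℝ, x ^ n * Real.exp (-(2⁻¹ : ℝ) * x ^ 2)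

lemma integrableJ (n : ℕ) : Integrable (fun x : ℝ => x ^ n * Real.exp (-(2⁻¹ : ℝ) * x ^ 2)) := by
  have h := integrable_rpow_mul_exp_neg_mul_sq (b := (2⁻¹ : ℝ)) (by norm_num) (s := (n : ℝ))
    (by
      have : (0:ℝ) ≤ (n:ℝ) := Nat.cast_nonneg n
      linarith)
  simpa [Real.rpow_natCast] using h

lemma J0 : Jmom 0 = Real.sqrt (2 * π) := by
  simp only [Jmom, pow_zero, one_mul]
  rw [integral_gaussian]
  congr 1
  ring

example (m : ℕ) (x : ℝ) :
    HasDerivAt (fun x : ℝ => x ^ (m + 1) * Real.exp (-(2⁻¹ : ℝ) * x ^ 2))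
      (((m : ℝ) + 1) * x ^ m * Real.exp (-(2⁻¹ : ℝ) * x ^ 2)
        - x ^ (m + 2) * Real.exp (-(2⁻¹ : ℝ) * x ^ 2)) x := by
  have h1 : HasDerivAt (fun x : ℝ => x ^ (m + 1)) ((m + 1 : ℕ) * x ^ m) x := hasDerivAt_pow _ _
  have h2 : HasDerivAt (fun x : ℝ => Real.exp (-(2⁻¹ : ℝ) * x ^ 2))
      (Real.exp (-(2⁻¹ : ℝ) * x ^ 2) * (-(2⁻¹ : ℝ) * (2 * x))) x := by
    have hin : HasDerivAt (fun x : ℝ => -(2⁻¹ : ℝ) * x ^ 2) (-(2⁻¹ : ℝ) * (2 * x)) x := by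
      simpa using ((hasDerivAt_pow 2 x)).const_mul (-(2⁻¹ : ℝ))
    exact (Real.hasDerivAt_exp _).comp x hin
  have := h1.fun_mul h2
  refine this.congr_deriv ?_
  push_cast
  ring

lemma tendstoJ (m : ℕ) :
    Tendsto (fun x : ℝ => x ^ m * Real.exp (-(2⁻¹ : ℝ) * x ^ 2)) atTop (nhds 0) := by
  have h := rpow_mul_exp_neg_mul_sq_isLittleO_exp_neg (b := (2⁻¹ : ℝ)) (by norm_num) ((m : ℝ))
  simp only [Real.rpow_natCast] at h
  refine h.trans_tendsto ?_
  have h2 : Filter.Tendsto (fun x : ℝ => (2⁻¹ : ℝ) * x) atTop atTop :=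
    Filter.Tendsto.const_mul_atTop (by norm_num) tendsto_id
  refine (Real.tendsto_exp_neg_atTop_nhds_zero.comp h2).congr (fun x => ?_)
  show Real.exp (-(2⁻¹ * x)) = _
  congr 1
  ring

lemma tendstoJbot (m : ℕ) :
    Tendsto (fun x : ℝ => x ^ m * Real.exp (-(2⁻¹ : ℝ) * x ^ 2)) atBot (nhds 0) := by
  have h : Tendsto (fun x : ℝ =>
      ((-1 : ℝ) ^ m) * (x ^ m * Real.exp (-(2⁻¹ : ℝ) * x ^ 2))) atTop (nhds 0) := by
    simpa using (tendstoJ m).const_mul ((-1 : ℝ) ^ m)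
  have h2 := h.comp tendsto_neg_atBot_atTop
  refine Filter.Tendsto.congr (fun x => ?_) h2
  show ((-1 : ℝ) ^ m) * ((-x) ^ m * Real.exp (-(2⁻¹ : ℝ) * (-x) ^ 2)) = _
  have hsq : ((-1 : ℝ) ^ m) * ((-1 : ℝ) ^ m) = 1 := by
    rw [← pow_add]; exact Even.neg_one_pow (Even.add_self m)
  rw [neg_sq, show ((-x : ℝ)) ^ m = (-1 : ℝ) ^ m * x ^ m from neg_pow x m,
    show ((-1 : ℝ) ^ m) * ((-1 : ℝ) ^ m * x ^ m * Real.exp (-(2⁻¹ : ℝ) * x ^ 2)) =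
      (((-1 : ℝ) ^ m) * ((-1 : ℝ) ^ m)) * (x ^ m * Real.exp (-(2⁻¹ : ℝ) * x ^ 2)) from by ring,
    hsq, one_mul]

lemma hasDerivJ (m : ℕ) (x : ℝ) :
    HasDerivAt (fun x : ℝ => x ^ (m + 1) * Real.exp (-(2⁻¹ : ℝ) * x ^ 2))
      (((m : ℝ) + 1) * (x ^ m * Real.exp (-(2⁻¹ : ℝ) * x ^ 2))
        - x ^ (m + 2) * Real.exp (-(2⁻¹ : ℝ) * x ^ 2)) x := by
  have h1 : HasDerivAt (fun x : ℝ => x ^ (m + 1)) ((m + 1 : ℕ) * x ^ m) x := hasDerivAt_pow _ _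
  have hin : HasDerivAt (fun x : ℝ => -(2⁻¹ : ℝ) * x ^ 2) (-(2⁻¹ : ℝ) * (2 * x)) x := by
    simpa using ((hasDerivAt_pow 2 x)).const_mul (-(2⁻¹ : ℝ))
  have h2 := hin.exp
  have := h1.fun_mul h2
  refine this.congr_deriv ?_
  push_cast
  ring

lemma partsJ (m : ℕ) : Jmom (m + 2) = ((m : ℝ) + 1) * Jmom m := by
  set g : ℝ → ℝ := fun x => ((m : ℝ) + 1) * (x ^ m * Real.exp (-(2⁻¹ : ℝ) * x ^ 2))
        - x ^ (m + 2) * Real.exp (-(2⁻¹ : ℝ) * x ^ 2) with hg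
  have hgint : Integrable g := ((integrableJ m).const_mul _).sub (integrableJ (m + 2))
  have h1 : ∫ x in Set.Ioi (0 : ℝ), g x = 0 - (0 : ℝ) ^ (m + 1) * Real.exp (-(2⁻¹ : ℝ) * 0 ^ 2) :=
    integral_Ioi_of_hasDerivAt_of_tendsto' (fun x _ => hasDerivJ m x)
      hgint.integrableOn (tendstoJ (m + 1))
  have h2 : ∫ x in Set.Iic (0 : ℝ), g x = (0 : ℝ) ^ (m + 1) * Real.exp (-(2⁻¹ : ℝ) * 0 ^ 2) - 0 :=
    integral_Iic_of_hasDerivAt_of_tendsto' (fun x _ => hasDerivJ m x)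
      hgint.integrableOn (tendstoJbot (m + 1))
  have h3 : ∫ x : ℝ, g x = 0 := by
    rw [← intervalIntegral.integral_Iic_add_Ioi hgint.integrableOn hgint.integrableOn, h1, h2]
    ring
  have h4 : ∫ x : ℝ, g x =
      ((m : ℝ) + 1) * Jmom m - Jmom (m + 2) := by
    rw [hg]
    rw [integral_sub (((integrableJ m).const_mul _)) (integrableJ (m + 2)),
      integral_const_mul]
    rfl
  rw [h4] at h3
  linarith

lemma J1 : Jmom 1 = 0 := by
  set g : ℝ → ℝ := fun x => -(x ^ 1 * Real.exp (-(2⁻¹ : ℝ) * x ^ 2)) with hg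
  have hgd : ∀ x : ℝ, HasDerivAt (fun x : ℝ => Real.exp (-(2⁻¹ : ℝ) * x ^ 2)) (g x) x := by
    intro x
    have hin : HasDerivAt (fun x : ℝ => -(2⁻¹ : ℝ) * x ^ 2) (-(2⁻¹ : ℝ) * (2 * x)) x := by
      simpa using ((hasDerivAt_pow 2 x)).const_mul (-(2⁻¹ : ℝ))
    have h := hin.exp
    convert h using 1
    show g x = Real.exp (-(2⁻¹ : ℝ) * x ^ 2) * (-(2⁻¹ : ℝ) * (2 * x))
    simp only [hg]
    ring
  have hgint : Integrable g := (integrableJ 1).neg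
  have h1 : ∫ x in Set.Ioi (0 : ℝ), g x = 0 - Real.exp (-(2⁻¹ : ℝ) * (0:ℝ) ^ 2) :=
    integral_Ioi_of_hasDerivAt_of_tendsto' (fun x _ => hgd x)
      hgint.integrableOn (by simpa using tendstoJ 0)
  have h2 : ∫ x in Set.Iic (0 : ℝ), g x = Real.exp (-(2⁻¹ : ℝ) * (0:ℝ) ^ 2) - 0 :=
    integral_Iic_of_hasDerivAt_of_tendsto' (fun x _ => hgd x)
      hgint.integrableOn (by simpa using tendstoJbot 0)
  have h3 : ∫ x : ℝ, g x = 0 := by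
    rw [← intervalIntegral.integral_Iic_add_Ioi hgint.integrableOn hgint.integrableOn, h1, h2]
    ring
  have h4 : ∫ x : ℝ, g x = -Jmom 1 := by
    rw [hg, integral_neg]
    rfl
  rw [h4] at h3
  linarith

lemma pdf_eq (x : ℝ) : gaussianPDFReal 0 1 x = (Real.sqrt (2 * π))⁻¹ *
    Real.exp (-(2⁻¹ : ℝ) * x ^ 2) := by
  simp only [gaussianPDFReal, NNReal.coe_one, mul_one, sub_zero]
  congr 1
  congr 1
  ring

lemma gauss_int (g : ℝ → ℝ) :
    ∫ x, g x ∂gaussianReal 0 1 = ∫ x, gaussianPDFReal 0 1 x * g x := by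
  rw [gaussianReal_of_var_ne_zero 0 one_ne_zero]
  have hmeas : Measurable fun x => (gaussianPDFReal 0 1 x).toNNReal :=
    (measurable_gaussianPDFReal 0 1).real_toNNReal
  have hd : (gaussianPDF 0 1) = fun x => ((gaussianPDFReal 0 1 x).toNNReal : ℝ≥0∞) := rfl
  rw [hd, integral_withDensity_eq_integral_smul hmeas]
  congr 1
  funext x
  rw [NNReal.smul_def, Real.coe_toNNReal _ (gaussianPDFReal_nonneg 0 1 x), smul_eq_mul]

lemma gauss_integrable (g : ℝ → ℝ)
    (h : Integrable (fun x => gaussianPDFReal 0 1 x * g x)) :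
    Integrable g (gaussianReal 0 1) := by
  rw [gaussianReal_of_var_ne_zero 0 one_ne_zero]
  have hmeas : AEMeasurable (fun x => (gaussianPDFReal 0 1 x).toNNReal) :=
    ((measurable_gaussianPDFReal 0 1).real_toNNReal).aemeasurable
  have hd : (gaussianPDF 0 1) = fun x => ((gaussianPDFReal 0 1 x).toNNReal : ℝ≥0∞) := rfl
  rw [hd, integrable_withDensity_iff_integrable_smul₀ hmeas]
  refine h.congr (by
    filter_upwards with x
    rw [NNReal.smul_def, Real.coe_toNNReal _ (gaussianPDFReal_nonneg 0 1 x), smul_eq_mul])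

/-- n-th moment of the standard gaussian. -/
def Mom (n : ℕ) : ℝ := ∫ x, x ^ n ∂gaussianReal 0 1

lemma integrable_pow_gauss (n : ℕ) : Integrable (fun x : ℝ => x ^ n) (gaussianReal 0 1) := by
  refine gauss_integrable _ ?_
  have : (fun x => gaussianPDFReal 0 1 x * x ^ n) =
      fun x => (Real.sqrt (2 * π))⁻¹ * (x ^ n * Real.exp (-(2⁻¹ : ℝ) * x ^ 2)) := by
    funext x; rw [pdf_eq]; ring
  rw [this]
  exact (integrableJ n).const_mul _

lemma Mom_eq (n : ℕ) : Mom n = (Real.sqrt (2 * π))⁻¹ * Jmom n := by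
  rw [Mom, gauss_int]
  have : (fun x => gaussianPDFReal 0 1 x * x ^ n) =
      fun x => (Real.sqrt (2 * π))⁻¹ * (x ^ n * Real.exp (-(2⁻¹ : ℝ) * x ^ 2)) := by
    funext x; rw [pdf_eq]; ring
  rw [this, integral_const_mul]
  rfl

lemma sqrt_two_pi_ne : Real.sqrt (2 * π) ≠ 0 := by
  positivity

lemma Mom0 : Mom 0 = 1 := by rw [Mom_eq, J0, inv_mul_cancel₀ sqrt_two_pi_ne]
lemma Mom1 : Mom 1 = 0 := by rw [Mom_eq, J1, mul_zero]
lemma Mom2 : Mom 2 = 1 := by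
  have := partsJ 0
  norm_num at this
  rw [Mom_eq, this, J0, inv_mul_cancel₀ sqrt_two_pi_ne]
lemma Mom3 : Mom 3 = 0 := by
  have := partsJ 1
  rw [Mom_eq, this, J1]
  norm_num
lemma Mom4 : Mom 4 = 3 := by
  have h2 := partsJ 2
  have h0 := partsJ 0
  norm_num at h2 h0
  rw [Mom_eq, h2, h0, J0]
  rw [← mul_assoc, show (Real.sqrt (2*π))⁻¹ * 3 = 3 * (Real.sqrt (2*π))⁻¹ from by ring,
    mul_assoc, inv_mul_cancel₀ sqrt_two_pi_ne, mul_one]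

/-- Type synonym of `ℝ` carrying the standard gaussian as volume. -/
def GR : Type := ℝ
instance : MeasurableSpace GR := inferInstanceAs (MeasurableSpace ℝ)
instance : MeasureSpace GR := ⟨gaussianReal 0 1⟩
instance : SigmaFinite (volume : Measure GR) := inferInstanceAs (SigmaFinite (gaussianReal 0 1))

lemma pi_int {p : ℕ} (f : Fin p → ℝ → ℝ) :
    ∫ ω : Fin p → ℝ, ∏ i, f i (ω i) ∂(Measure.pi fun _ => gaussianReal 0 1) =
      ∏ i, ∫ x, f i x ∂gaussianReal 0 1 :=
  MeasureTheory.integral_fintype_prod_eq_prod (ι := Fin p) (E := fun _ => ℝ) (μ := fun _ => gaussianReal 0 1) f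

lemma pi_integrable {p : ℕ} (f : Fin p → ℝ → ℝ) (hf : ∀ i, Integrable (f i) (gaussianReal 0 1)) :
    Integrable (fun ω : Fin p → ℝ => ∏ i, f i (ω i)) (Measure.pi fun _ => gaussianReal 0 1) :=
  MeasureTheory.Integrable.fintype_prod (E := ℝ) (μ := fun _ => gaussianReal 0 1) (f := f) hf

lemma int_monomial {p : ℕ} (e : Fin p → ℕ) :
    ∫ ω : Fin p → ℝ, ∏ i, (ω i) ^ (e i) ∂(Measure.pi fun _ => gaussianReal 0 1) =
      ∏ i, Mom (e i) :=
  pi_int (fun i x => x ^ e i)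

lemma integrable_monomial {p : ℕ} (e : Fin p → ℕ) :
    Integrable (fun ω : Fin p → ℝ => ∏ i, (ω i) ^ (e i))
      (Measure.pi fun _ => gaussianReal 0 1) :=
  pi_integrable _ (fun i => integrable_pow_gauss (e i))

lemma prod_pow_single {p : ℕ} (x : Fin p → ℝ) (a : Fin p) :
    ∏ i, x i ^ (if i = a then 1 else 0) = x a := by
  have h : ∀ i : Fin p, x i ^ (if i = a then 1 else 0) = if i = a then x i else 1 := by
    intro i; split_ifs <;> simp
  rw [Finset.prod_congr rfl fun i _ => h i]
  simp

lemma pair_rep {p : ℕ} (x : Fin p → ℝ) (a b : Fin p) :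
    x a * x b = ∏ i, x i ^ ((if i = a then 1 else 0) + (if i = b then 1 else 0)) := by
  simp only [pow_add, Finset.prod_mul_distrib, prod_pow_single]

lemma quad_rep {p : ℕ} (x : Fin p → ℝ) (a b c d : Fin p) :
    x a * x b * x c * x d = ∏ i, x i ^ ((if i = a then 1 else 0) + (if i = b then 1 else 0)
      + (if i = c then 1 else 0) + (if i = d then 1 else 0)) := by
  simp only [pow_add, Finset.prod_mul_distrib, prod_pow_single]

lemma prod_two {p : ℕ} (f : Fin p → ℝ) (a c : Fin p) (hac : a ≠ c)
    (h : ∀ i, i ≠ a → i ≠ c → f i = 1) : ∏ i, f i = f a * f c := by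
  rw [← Finset.prod_subset (Finset.subset_univ {a, c}) (fun i _ hi => by
    simp only [Finset.mem_insert, Finset.mem_singleton] at hi
    push_neg at hi
    exact h i hi.1 hi.2)]
  rw [Finset.prod_insert (by simp [hac]), Finset.prod_singleton]

lemma int2 {p : ℕ} (a b : Fin p) :
    ∫ ω : Fin p → ℝ, ω a * ω b ∂(Measure.pi fun _ => gaussianReal 0 1) =
      if a = b then 1 else 0 := by
  have : (fun ω : Fin p → ℝ => ω a * ω b) =
      fun ω => ∏ i, (ω i) ^ ((if i = a then 1 else 0) + (if i = b then 1 else 0)) := by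
    funext ω; exact pair_rep ω a b
  rw [this, int_monomial]
  by_cases hab : a = b
  · subst hab
    simp only [if_pos rfl]
    rw [Finset.prod_eq_single a (fun i _ hi => by simp [hi, Mom0])
      (fun h => absurd (Finset.mem_univ a) h)]
    norm_num [Mom2]
  · rw [if_neg hab]
    refine Finset.prod_eq_zero (Finset.mem_univ a) ?_
    simp [Ne.symm hab, Mom1, hab]

lemma integrable2 {p : ℕ} (a b : Fin p) :
    Integrable (fun ω : Fin p → ℝ => ω a * ω b) (Measure.pi fun _ => gaussianReal 0 1) := by
  have : (fun ω : Fin p → ℝ => ω a * ω b) =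
      fun ω => ∏ i, (ω i) ^ ((if i = a then 1 else 0) + (if i = b then 1 else 0)) := by
    funext ω; exact pair_rep ω a b
  rw [this]; exact integrable_monomial _

lemma integrable4 {p : ℕ} (a b c d : Fin p) :
    Integrable (fun ω : Fin p → ℝ => ω a * ω b * ω c * ω d)
      (Measure.pi fun _ => gaussianReal 0 1) := by
  have : (fun ω : Fin p → ℝ => ω a * ω b * ω c * ω d) =
      fun ω => ∏ i, (ω i) ^ ((if i = a then 1 else 0) + (if i = b then 1 else 0)
        + (if i = c then 1 else 0) + (if i = d then 1 else 0)) := by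
    funext ω; exact quad_rep ω a b c d
  rw [this]; exact integrable_monomial _

lemma int4 {p : ℕ} (a b c d : Fin p) :
    ∫ ω : Fin p → ℝ, ω a * ω b * ω c * ω d ∂(Measure.pi fun _ => gaussianReal 0 1) =
      (if a = b then (1:ℝ) else 0) * (if c = d then 1 else 0)
      + (if a = c then (1:ℝ) else 0) * (if b = d then 1 else 0)
      + (if a = d then (1:ℝ) else 0) * (if b = c then 1 else 0) := by
  have hrep : (fun ω : Fin p → ℝ => ω a * ω b * ω c * ω d) =
      fun ω => ∏ i, (ω i) ^ ((if i = a then 1 else 0) + (if i = b then 1 else 0)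
        + (if i = c then 1 else 0) + (if i = d then 1 else 0)) := by
    funext ω; exact quad_rep ω a b c d
  rw [hrep, int_monomial]
  by_cases hab : a = b
  · subst hab
    by_cases hcd : c = d
    · subst hcd
      by_cases hac : a = c
      · subst hac
        rw [Finset.prod_eq_single a (fun i _ hi => by simp [hi, Mom0])
          (fun h => absurd (Finset.mem_univ a) h)]
        norm_num [Mom4]
      · rw [prod_two _ a c hac (fun i hia hic => by simp [hia, hic, Mom0])]
        simp [hac, Ne.symm hac, Mom2]
    · by_cases hca : c = a
      · have had : ¬ a = d := by rw [← hca]; exact hcd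
        rw [Finset.prod_eq_zero (Finset.mem_univ c) (by simp [hca, hcd, had, Mom3])]
        simp [hca, hcd, had]
      · have hac : ¬ a = c := fun h => hca h.symm
        rw [Finset.prod_eq_zero (Finset.mem_univ c) (by simp [hca, hcd, Mom1])]
        by_cases had : a = d
        · have hdc : ¬ d = c := fun h => hca ((had.trans h).symm)
          simp [hcd, had, hac, hdc]
        · simp [hcd, had, hac]
  · by_cases hcd : c = d
    · subst hcd
      by_cases hac : a = c
      · have hbc : ¬ b = c := fun h => hab (hac.trans h.symm)
        have hcb : ¬ c = b := fun h => hbc h.symm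
        rw [Finset.prod_eq_zero (Finset.mem_univ a) (by simp [hab, hac, hcb, Mom3])]
        simp [hab, hac, hbc, hcb]
      · rw [Finset.prod_eq_zero (Finset.mem_univ a) (by simp [hab, hac, Mom1])]
        simp [hab, hac]
    · by_cases hac : a = c
      · subst hac
        by_cases hbd : b = d
        · subst hbd
          rw [prod_two _ a b (fun h => hab h) (fun i hia hib => by simp [hia, hib, Mom0])]
          simp [hab, Ne.symm hab, Mom2]
        · have hba : ¬ b = a := fun h => hab h.symm
          rw [Finset.prod_eq_zero (Finset.mem_univ b) (by simp [hba, hbd, Mom1])]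
          simp [hab, hbd, hba]
      · by_cases had : a = d
        · subst had
          by_cases hbc : b = c
          · subst hbc
            rw [prod_two _ a b (fun h => hab h) (fun i hia hib => by simp [hia, hib, Mom0])]
            simp [hab, Ne.symm hab, Mom2]
          · have hba : ¬ b = a := fun h => hab h.symm
            rw [Finset.prod_eq_zero (Finset.mem_univ b) (by simp [hba, hbc, Mom1])]
            simp [hab, hac, hbc, hba]
        · rw [Finset.prod_eq_zero (Finset.mem_univ a) (by simp [hab, hac, had, Mom1])]
          simp [hab, hac, had]

lemma cube_expand {p : ℕ} (s : Finset (Fin p)) (x : Fin p → ℝ) (j : Fin p) :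
    x j * (∑ i ∈ s, x i) ^ 3 = ∑ a ∈ s, ∑ b ∈ s, ∑ c ∈ s, x j * x a * x b * x c := by
  have h : (∑ i ∈ s, x i) ^ 3 = (∑ a ∈ s, x a) * ((∑ b ∈ s, x b) * (∑ c ∈ s, x c)) := by ring
  rw [h]
  simp only [Finset.sum_mul, Finset.mul_sum]
  exact Finset.sum_congr rfl fun a _ => Finset.sum_congr rfl fun b _ =>
    Finset.sum_congr rfl fun c _ => by ring


end AuxGaussianMoments

/-- **Example 1.** Let `x₁, …, x_p, ε` be i.i.d. standard normal, `k ≤ p`,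
`S = x₁ + … + x_k` and `y = S − S³/(3k) + ε`. Then `E[x_j · y] = 0` for every
`j`: the response is marginally uncorrelated with every covariate. -/
theorem cubic_model_zero_correlation
    (p k : ℕ) (hk : 0 < k) (hkp : k ≤ p) (j : Fin p) :
    ∫ ω : (Fin p → ℝ) × ℝ,
        ω.1 j * ((∑ i ∈ Finset.univ.filter fun i : Fin p => i.1 < k, ω.1 i) -
          (∑ i ∈ Finset.univ.filter fun i : Fin p => i.1 < k, ω.1 i) ^ 3 / (3 * k) +
          ω.2)
      ∂((Measure.pi fun _ : Fin p => gaussianReal 0 1).prod (gaussianReal 0 1)) = 0 := by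
  set s : Finset (Fin p) := Finset.univ.filter (fun i : Fin p => i.1 < k) with hs
  set P : Measure (Fin p → ℝ) := Measure.pi fun _ : Fin p => gaussianReal 0 1 with hP
  have hcard : s.card = k := by
    have h1 : s = Finset.map (Fin.castLEEmb hkp) Finset.univ := by
      ext i
      simp only [hs, Finset.mem_filter, Finset.mem_univ, true_and, Finset.mem_map,
        Fin.castLEEmb, Function.Embedding.coeFn_mk]
      constructor
      · intro hi
        refine ⟨⟨i.1, hi⟩, ?_⟩
        ext
        rfl
      · rintro ⟨a, rfl⟩
        exact a.2
    rw [h1, Finset.card_map, Finset.card_univ, Fintype.card_fin]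
  -- the deterministic part
  set G : (Fin p → ℝ) → ℝ := fun x => (∑ a ∈ s, x j * x a) -
      (∑ a ∈ s, ∑ b ∈ s, ∑ c ∈ s, x j * x a * x b * x c) / (3 * k) with hG
  have hGeq : ∀ x : Fin p → ℝ,
      x j * ((∑ i ∈ s, x i) - (∑ i ∈ s, x i) ^ 3 / (3 * (k:ℝ)) + (0:ℝ)) = G x + 0 := by
    intro x
    rw [add_zero, add_zero, hG, mul_sub, Finset.mul_sum, ← mul_div_assoc, cube_expand]
  -- integrability
  have hT1 : Integrable (fun x : Fin p → ℝ => ∑ a ∈ s, x j * x a) P :=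
    integrable_finset_sum s (fun a _ => integrable2 j a)
  have hT2 : Integrable
      (fun x : Fin p → ℝ => ∑ a ∈ s, ∑ b ∈ s, ∑ c ∈ s, x j * x a * x b * x c) P :=
    integrable_finset_sum s fun a _ => integrable_finset_sum s fun b _ =>
      integrable_finset_sum s fun c _ => integrable4 j a b c
  have hGint : Integrable G P := hT1.sub (hT2.div_const _)
  have hcoordj : Integrable (fun x : Fin p → ℝ => x j) P :=
    (integrable_monomial (fun i : Fin p => if i = j then 1 else 0)).congr
      (Filter.Eventually.of_forall fun ω => prod_pow_single ω j)
  have hid : Integrable (fun y : ℝ => y) (gaussianReal 0 1) := by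
    simpa using integrable_pow_gauss 1
  -- split off the noise
  have hsplit : (fun ω : (Fin p → ℝ) × ℝ =>
      ω.1 j * ((∑ i ∈ s, ω.1 i) - (∑ i ∈ s, ω.1 i) ^ 3 / (3 * k) + ω.2)) =
      fun ω => G ω.1 * 1 + ω.1 j * ω.2 := by
    funext ω
    have h := hGeq ω.1
    rw [add_zero, add_zero] at h
    rw [mul_one, ← h]
    ring
  rw [hsplit, integral_add (hGint.mul_prod (integrable_const 1)) (hcoordj.mul_prod hid),
    integral_prod_mul (f := G) (g := fun _ => (1:ℝ)),
    integral_prod_mul (f := fun x : Fin p → ℝ => x j) (g := fun y : ℝ => y)]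
  have hε1 : ∫ y, y ∂gaussianReal 0 1 = 0 := by
    have := Mom1
    simpa [Mom] using this
  rw [hε1, mul_zero, add_zero]
  have hone : ∫ _ : ℝ, (1:ℝ) ∂gaussianReal 0 1 = 1 := by simp
  rw [hone, mul_one]
  -- compute ∫ G
  have hT1val : ∫ x, (∑ a ∈ s, x j * x a) ∂P = if j ∈ s then 1 else 0 := by
    rw [integral_finset_sum s (fun a _ => integrable2 j a)]
    rw [Finset.sum_congr rfl fun a _ => int2 j a]
    exact Finset.sum_ite_eq s j (fun _ => (1:ℝ))
  have hT2val : ∫ x, (∑ a ∈ s, ∑ b ∈ s, ∑ c ∈ s, x j * x a * x b * x c) ∂P =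
      (if j ∈ s then (1:ℝ) else 0) * (3 * k) := by
    rw [integral_finset_sum s (fun a _ => integrable_finset_sum s fun b _ =>
      integrable_finset_sum s fun c _ => integrable4 j a b c)]
    have step : ∀ a ∈ s, ∫ x, (∑ b ∈ s, ∑ c ∈ s, x j * x a * x b * x c) ∂P =
        ∑ b ∈ s, ∑ c ∈ s, ((if j = a then (1:ℝ) else 0) * (if b = c then 1 else 0)
          + (if j = b then (1:ℝ) else 0) * (if a = c then 1 else 0)
          + (if j = c then (1:ℝ) else 0) * (if a = b then 1 else 0)) := by
      intro a _
      rw [integral_finset_sum s (fun b _ => integrable_finset_sum s fun c _ =>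
        integrable4 j a b c)]
      refine Finset.sum_congr rfl fun b _ => ?_
      rw [integral_finset_sum s (fun c _ => integrable4 j a b c)]
      exact Finset.sum_congr rfl fun c _ => int4 j a b c
    rw [Finset.sum_congr rfl step]
    -- now a pure finite sum computation
    have A : ∑ a ∈ s, ∑ b ∈ s, ∑ c ∈ s,
        ((if j = a then (1:ℝ) else 0) * (if b = c then 1 else 0)) =
        (if j ∈ s then (1:ℝ) else 0) * k := by
      have inner : ∀ a ∈ s, ∑ b ∈ s, ∑ c ∈ s,
          ((if j = a then (1:ℝ) else 0) * (if b = c then 1 else 0)) =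
          (if j = a then (1:ℝ) else 0) * k := by
        intro a _
        have h1 : ∀ b ∈ s, ∑ c ∈ s, ((if j = a then (1:ℝ) else 0) * (if b = c then 1 else 0))
            = (if j = a then (1:ℝ) else 0) := by
          intro b hb
          rw [← Finset.mul_sum, Finset.sum_ite_eq s b (fun _ => (1:ℝ)), if_pos hb, mul_one]
        rw [Finset.sum_congr rfl h1, Finset.sum_const, hcard, nsmul_eq_mul, mul_comm]
      rw [Finset.sum_congr rfl inner, ← Finset.sum_mul,
        Finset.sum_ite_eq s j (fun _ => (1:ℝ))]
    have B : ∑ a ∈ s, ∑ b ∈ s, ∑ c ∈ s,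
        ((if j = b then (1:ℝ) else 0) * (if a = c then 1 else 0)) =
        (if j ∈ s then (1:ℝ) else 0) * k := by
      have inner : ∀ a ∈ s, ∑ b ∈ s, ∑ c ∈ s,
          ((if j = b then (1:ℝ) else 0) * (if a = c then 1 else 0)) =
          (if j ∈ s then (1:ℝ) else 0) := by
        intro a ha
        have h1 : ∀ b ∈ s, ∑ c ∈ s, ((if j = b then (1:ℝ) else 0) * (if a = c then 1 else 0))
            = (if j = b then (1:ℝ) else 0) := by
          intro b _
          rw [← Finset.mul_sum, Finset.sum_ite_eq s a (fun _ => (1:ℝ)), if_pos ha, mul_one]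
        rw [Finset.sum_congr rfl h1, Finset.sum_ite_eq s j (fun _ => (1:ℝ))]
      rw [Finset.sum_congr rfl inner, Finset.sum_const, hcard, nsmul_eq_mul, mul_comm]
    have C : ∑ a ∈ s, ∑ b ∈ s, ∑ c ∈ s,
        ((if j = c then (1:ℝ) else 0) * (if a = b then 1 else 0)) =
        (if j ∈ s then (1:ℝ) else 0) * k := by
      have inner : ∀ a ∈ s, ∑ b ∈ s, ∑ c ∈ s,
          ((if j = c then (1:ℝ) else 0) * (if a = b then 1 else 0)) =
          (if j ∈ s then (1:ℝ) else 0) * (if a ∈ s then (1:ℝ) else 0) := by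
        intro a _
        have h1 : ∀ b ∈ s, ∑ c ∈ s, ((if j = c then (1:ℝ) else 0) * (if a = b then 1 else 0))
            = (if j ∈ s then (1:ℝ) else 0) * (if a = b then (1:ℝ) else 0) := by
          intro b _
          rw [← Finset.sum_mul, Finset.sum_ite_eq s j (fun _ => (1:ℝ))]
        rw [Finset.sum_congr rfl h1, ← Finset.mul_sum,
          Finset.sum_ite_eq s a (fun _ => (1:ℝ))]
      rw [Finset.sum_congr rfl inner]
      have h2 : ∀ a ∈ s, (if j ∈ s then (1:ℝ) else 0) * (if a ∈ s then (1:ℝ) else 0)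
          = (if j ∈ s then (1:ℝ) else 0) := fun a ha => by rw [if_pos ha, mul_one]
      rw [Finset.sum_congr rfl h2, Finset.sum_const, hcard, nsmul_eq_mul, mul_comm]
    simp only [Finset.sum_add_distrib]
    rw [A, B, C]
    ring
  have hGval : ∫ x, G x ∂P = 0 := by
    rw [hG]
    rw [integral_sub hT1 (hT2.div_const _), integral_div, hT1val, hT2val]
    have h3k : (3 * (k:ℝ)) ≠ 0 := by
      have : (0:ℝ) < k := by exact_mod_cast hk
      positivity
    field_simp
    ring
  rw [hGval]

end
end
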